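/- Run OpConEx for T ≥ 1 iterations with step sizes satisfying condition (C), and let B ≥ 0 be a constant. Then: (i) for every x ∈ X̃, Γ_T·⟨F(x), x̄^T − x⟩ ≤ (γ₀η₀/2)‖x − x⁰‖² + N_T(0); and (ii) Γ_T·‖[g(x̄^T)]_+‖ ≤ (γ₀η₀/2)‖x* − x⁰‖² + (γ₀τ₀/2)(‖λ*‖+1)² + N_T(‖λ*‖+1). -/

import Mathlib

open scoped InnerProductSpace BigOperators

noncomputable section

/-- ℝ^k with the Euclidean norm. -/
abbrev Euc (k : ℕ) := EuclideanSpace ℝ (Fin k)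

/-- `∇g(x)ᵀ d`, where `G j` is the j-th column of `∇g(x)`. -/
def gradT {m : ℕ} {E : Type*} [NormedAddCommGroup E] [InnerProductSpace ℝ E]
    (G : Fin m → E) (d : E) : Euc m :=
  (EuclideanSpace.equiv (Fin m) ℝ).symm fun j => ⟪G j, d⟫_ℝ

/-- `∇g(x) μ`, where `G j` is the j-th column of `∇g(x)`. -/
def gradMul {m : ℕ} {E : Type*} [NormedAddCommGroup E] [InnerProductSpace ℝ E]
    (G : Fin m → E) (μ : Euc m) : E :=
  ∑ j, μ j • G j

/-- componentwise positive part `[v]₊`. -/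
def posPart {m : ℕ} (v : Euc m) : Euc m :=
  (EuclideanSpace.equiv (Fin m) ℝ).symm fun j => max (v j) 0

/-- The quantity `N_T(a)` from Lemma 2.5 (OpConEx working bound with free parameter `B`). -/
def opconexNT {n m : ℕ} (γ η τ θ : ℕ → ℝ) (Lg Hg DX B : ℝ)
    (F : Euc n → Euc n) (x xm : ℕ → Euc n) (lam : ℕ → Euc m)
    (ell ellm : ℕ → Euc m) (T : ℕ) (a : ℝ) : ℝ :=
  (∑ t ∈ Finset.range T,
      (γ t * θ t * ⟪F (x t) - F (xm t), x t - x (t + 1)⟫_ℝ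
        + γ t * θ t * ⟪ell t - ellm t, lam (t + 1) - lam t⟫_ℝ
        - γ t * (η t - B * Lg) / 2 * ‖x (t + 1) - x t‖ ^ 2
        - γ t * τ t / 2 * ‖lam t - lam (t + 1)‖ ^ 2
        + (a * Hg + Lg * DX / 2 * max (a - B) 0) * γ t * ‖x (t + 1) - x t‖))
    + γ (T - 1) / (2 * η (T - 1)) * ‖F (x T) - F (xm T)‖ ^ 2
    + γ (T - 1) / (2 * τ (T - 1)) * ‖ell T - ellm T‖ ^ 2

/- ### Auxiliary lemmas -/

lemma gradT_apply {m : ℕ} {E : Type*} [NormedAddCommGroup E] [InnerProductSpace ℝ E]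
    (G : Fin m → E) (d : E) (j : Fin m) : gradT G d j = ⟪G j, d⟫_ℝ := rfl

lemma inner_gradMul {m : ℕ} {E : Type*} [NormedAddCommGroup E] [InnerProductSpace ℝ E]
    (G : Fin m → E) (μ : Euc m) (d : E) : ⟪gradMul G μ, d⟫_ℝ = ⟪μ, gradT G d⟫_ℝ := by
  simp [gradMul, sum_inner, real_inner_smul_left, PiLp.inner_apply, gradT_apply]
  exact Finset.sum_congr rfl fun _ _ => mul_comm _ _

lemma inner_gradMul' {m : ℕ} {E : Type*} [NormedAddCommGroup E] [InnerProductSpace ℝ E]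
    (G : Fin m → E) (μ : Euc m) (d : E) : ⟪gradMul G μ, d⟫_ℝ = ⟪gradT G d, μ⟫_ℝ := by
  rw [inner_gradMul, real_inner_comm]

lemma gradT_sub {m : ℕ} {E : Type*} [NormedAddCommGroup E] [InnerProductSpace ℝ E]
    (G : Fin m → E) (d₁ d₂ : E) : gradT G (d₁ - d₂) = gradT G d₁ - gradT G d₂ := by
  ext j; simp [gradT_apply, inner_sub_right]

lemma le_of_eps (a b K : ℝ) (hK : 0 ≤ K) (h : ∀ ε : ℝ, 0 < ε → ε ≤ 1 → a ≤ b + ε * K) : a ≤ b := by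
  rcases eq_or_lt_of_le hK with hK0 | hK0
  · have := h 1 one_pos le_rfl; linarith [hK0]
  · by_contra hab
    push_neg at hab
    set ε := min 1 ((a - b) / (2 * K)) with hε
    have hd : 0 < (a - b) / (2 * K) := div_pos (by linarith) (by linarith)
    have hε0 : 0 < ε := lt_min one_pos hd
    have hε1 : ε ≤ 1 := min_le_left _ _
    have h2 : ε * K ≤ (a - b) / 2 := by
      have h3 : ε ≤ (a - b) / (2 * K) := min_le_right _ _
      calc ε * K ≤ ((a - b) / (2 * K)) * K := by nlinarith
        _ = (a - b) / 2 := by field_simp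
    have := h ε hε0 hε1
    linarith

lemma three_point {E : Type*} [NormedAddCommGroup E] [InnerProductSpace ℝ E] {S : Set E}
    (hS : Convex ℝ S) {c x0 u : E} {η : ℝ} (hη : 0 < η) (hu : u ∈ S)
    (hmin : ∀ y ∈ S, ⟪c, u⟫_ℝ + η / 2 * ‖u - x0‖ ^ 2 ≤ ⟪c, y⟫_ℝ + η / 2 * ‖y - x0‖ ^ 2)
    {y : E} (hy : y ∈ S) :
    ⟪c, u - y⟫_ℝ ≤ η / 2 * (‖y - x0‖ ^ 2 - ‖u - x0‖ ^ 2 - ‖y - u‖ ^ 2) := by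
  have hid : 2 * ⟪u - x0, y - u⟫_ℝ = ‖y - x0‖ ^ 2 - ‖u - x0‖ ^ 2 - ‖y - u‖ ^ 2 := by
    have he : y - u = (y - x0) - (u - x0) := by abel
    have h2 : ‖(y - x0) - (u - x0)‖ ^ 2 =
        ‖y - x0‖ ^ 2 - 2 * ⟪y - x0, u - x0⟫_ℝ + ‖u - x0‖ ^ 2 := by
      rw [norm_sub_sq_real]
    have h3 : ⟪u - x0, (y - x0) - (u - x0)⟫_ℝ
        = ⟪u - x0, y - x0⟫_ℝ - ⟪u - x0, u - x0⟫_ℝ := inner_sub_right _ _ _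
    have h4 : ⟪u - x0, u - x0⟫_ℝ = ‖u - x0‖ ^ 2 := real_inner_self_eq_norm_sq _
    have h5 : ⟪u - x0, y - x0⟫_ℝ = ⟪y - x0, u - x0⟫_ℝ := real_inner_comm _ _
    rw [he, h2, h3, h4, h5]; ring
  have main : ⟪c, u - y⟫_ℝ ≤ η * ⟪u - x0, y - u⟫_ℝ := by
    have key : ∀ ε : ℝ, 0 < ε → ε ≤ 1 →
        ⟪c, u - y⟫_ℝ ≤ η * ⟪u - x0, y - u⟫_ℝ + ε * (η / 2 * ‖y - u‖ ^ 2) := by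
      intro ε hε0 hε1
      have hyε : u + ε • (y - u) ∈ S := by
        have := hS hu hy (by linarith : (0:ℝ) ≤ 1 - ε) (le_of_lt hε0) (by ring)
        convert this using 1
        module
      have hm := hmin _ hyε
      have hnorm : ‖u + ε • (y - u) - x0‖ ^ 2 =
          ‖u - x0‖ ^ 2 + 2 * ε * ⟪u - x0, y - u⟫_ℝ + ε ^ 2 * ‖y - u‖ ^ 2 := by
        have he2 : u + ε • (y - u) - x0 = (u - x0) + ε • (y - u) := by module
        rw [he2, norm_add_sq_real, real_inner_smul_right, norm_smul]
        simp [abs_of_pos hε0]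
        ring
      have hinner : ⟪c, u + ε • (y - u)⟫_ℝ = ⟪c, u⟫_ℝ + ε * ⟪c, y - u⟫_ℝ := by
        rw [inner_add_right, real_inner_smul_right]
      rw [hinner, hnorm] at hm
      have h7 : 0 ≤ ⟪c, y - u⟫_ℝ + η * ⟪u - x0, y - u⟫_ℝ + ε * (η / 2) * ‖y - u‖ ^ 2 := by
        nlinarith [hm]
      have h8 : ⟪c, u - y⟫_ℝ = - ⟪c, y - u⟫_ℝ := by
        rw [← inner_neg_right]
        congr 1
        abel
      nlinarith [h7]
    exact le_of_eps _ _ _ (by positivity) key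
  nlinarith [main, hid]

lemma telescope_dec (c a : ℕ → ℝ) (hc : ∀ t, c (t + 1) ≤ c t) (ha : ∀ t, 0 ≤ a t) :
    ∀ T, 1 ≤ T → ∑ t ∈ Finset.range T, c t * (a t - a (t + 1)) ≤ c 0 * a 0 - c (T - 1) * a T := by
  intro T
  induction T with
  | zero => omega
  | succ T ih =>
    intro _
    rcases Nat.eq_or_lt_of_le (Nat.one_le_iff_ne_zero.mpr (by omega) : 1 ≤ T + 1) with h1 | h1
    · simp [← h1]
      ring_nf
      nlinarith [ha 1, ha 0]
    · have hT : 1 ≤ T := by omega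
      have := ih hT
      rw [Finset.sum_range_succ]
      have hTm : T - 1 + 1 = T := by omega
      have hcc : c T ≤ c (T - 1) := by rw [← hTm]; exact hc (T - 1)
      have : c T * a T ≤ c (T - 1) * a T := mul_le_mul_of_nonneg_right hcc (ha T)
      simp only [Nat.add_sub_cancel]
      nlinarith [ih hT]

lemma orthant_convex (m : ℕ) : Convex ℝ {v : Euc m | ∀ j, 0 ≤ v j} := by
  intro u hu v hv p q hp hq hpq
  intro j
  have h : (p • u + q • v) j = p * u j + q * v j := by
    simp [PiLp.add_apply, PiLp.smul_apply, smul_eq_mul]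
  rw [h]
  have := hu j; have := hv j
  positivity

lemma euc_inner_eq {m : ℕ} (v w : Euc m) : ⟪v, w⟫_ℝ = ∑ j, v j * w j := by
  simp [PiLp.inner_apply]
  exact Finset.sum_congr rfl fun _ _ => mul_comm _ _

lemma euc_inner_nonpos {m : ℕ} (v w : Euc m) (hv : ∀ j, v j ≤ 0) (hw : ∀ j, 0 ≤ w j) :
    ⟪v, w⟫_ℝ ≤ 0 := by
  rw [euc_inner_eq]
  exact Finset.sum_nonpos fun j _ => mul_nonpos_of_nonpos_of_nonneg (hv j) (hw j)

lemma posPart_apply {m : ℕ} (v : Euc m) (j : Fin m) : posPart v j = max (v j) 0 := rfl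

lemma inner_le_posPart {m : ℕ} (lam v : Euc m) (hlam : ∀ j, 0 ≤ lam j) :
    ⟪lam, v⟫_ℝ ≤ ‖lam‖ * ‖posPart v‖ := by
  calc ⟪lam, v⟫_ℝ ≤ ⟪lam, posPart v⟫_ℝ := by
        rw [euc_inner_eq, euc_inner_eq]
        apply Finset.sum_le_sum
        intro j _
        exact mul_le_mul_of_nonneg_left (le_max_left _ _) (hlam j)
    _ ≤ ‖lam‖ * ‖posPart v‖ := real_inner_le_norm _ _

lemma inner_posPart_self {m : ℕ} (v : Euc m) : ⟪v, posPart v⟫_ℝ = ‖posPart v‖ ^ 2 := by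
  rw [← real_inner_self_eq_norm_sq]
  rw [euc_inner_eq, euc_inner_eq]
  apply Finset.sum_congr rfl
  intro j _
  simp only [posPart_apply]
  rcases le_or_gt (v j) 0 with h | h
  · simp [max_eq_right h]
  · simp [max_eq_left (le_of_lt h)]

lemma young_ip {E : Type*} [NormedAddCommGroup E] [InnerProductSpace ℝ E]
    (w z : E) {γ η : ℝ} (hγ : 0 < γ) (hη : 0 < η) :
    γ * ⟪w, z⟫_ℝ - γ * η / 2 * ‖z‖ ^ 2 ≤ γ / (2 * η) * ‖w‖ ^ 2 := by
  have h1 : ⟪w, z⟫_ℝ ≤ ‖w‖ * ‖z‖ := real_inner_le_norm _ _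
  have h2 : ‖w‖ * ‖z‖ ≤ 1 / (2 * η) * ‖w‖ ^ 2 + η / 2 * ‖z‖ ^ 2 := by
    rw [← sub_nonneg]
    have key : 1 / (2 * η) * ‖w‖ ^ 2 + η / 2 * ‖z‖ ^ 2 - ‖w‖ * ‖z‖
        = (‖w‖ - η * ‖z‖) ^ 2 / (2 * η) := by
      field_simp
      ring
    rw [key]
    positivity
  have h3 : γ * ⟪w, z⟫_ℝ ≤ γ * (1 / (2 * η) * ‖w‖ ^ 2 + η / 2 * ‖z‖ ^ 2) :=
    mul_le_mul_of_nonneg_left (le_trans h1 h2) hγ.le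
  have h4 : γ * (1 / (2 * η) * ‖w‖ ^ 2) = γ / (2 * η) * ‖w‖ ^ 2 := by ring
  nlinarith [h3]

lemma weighted_avg_inner {n : ℕ} (γ : ℕ → ℝ) (T : ℕ)
    (hΓ : (∑ t ∈ Finset.range T, γ t) ≠ 0)
    (x : ℕ → Euc n) (w z : Euc n) :
    (∑ t ∈ Finset.range T, γ t) *
        ⟪w, (∑ t ∈ Finset.range T, γ t)⁻¹ • (∑ t ∈ Finset.range T, γ t • x (t + 1)) - z⟫_ℝ
    = ∑ t ∈ Finset.range T, γ t * ⟪w, x (t + 1) - z⟫_ℝ := by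
  rw [inner_sub_right, real_inner_smul_right, inner_sum]
  simp only [real_inner_smul_right, inner_sub_right, mul_sub]
  rw [Finset.sum_sub_distrib, ← Finset.sum_mul]
  congr 1
  rw [← mul_assoc, mul_inv_cancel₀ hΓ, one_mul]
set_option maxHeartbeats 1000000 in
/-- **Lemma 2.5 of the paper.** Working bound for the OpConEx method with a free
parameter `B ≥ 0` replacing knowledge of `‖λ*‖`. -/
theorem opconex_working_bound_with_B
    {n m : ℕ}
    (X : Set (Euc n)) (hXne : X.Nonempty) (hXcomp : IsCompact X) (hXconv : Convex ℝ X)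
    (F : Euc n → Euc n) (L H : ℝ) (hL : 0 ≤ L) (hH : 0 ≤ H)
    (hFmono : ∀ x₁ ∈ X, ∀ x₂ ∈ X, 0 ≤ ⟪F x₁ - F x₂, x₁ - x₂⟫_ℝ)
    (hFlip : ∀ x₁ ∈ X, ∀ x₂ ∈ X, ‖F x₁ - F x₂‖ ≤ L * ‖x₁ - x₂‖ + H)
    (g : Euc n → Euc m) (Gg : Euc n → Fin m → Euc n)
    (Mg Lg Hg : ℝ) (hMg : 0 ≤ Mg) (hLg : 0 ≤ Lg) (hHg : 0 ≤ Hg)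
    (hgconv : ∀ x ∈ X, ∀ y ∈ X, ∀ j, g x j + ⟪Gg x j, y - x⟫_ℝ ≤ g y j)
    (hglip : ∀ x₁ ∈ X, ∀ x₂ ∈ X, ‖g x₁ - g x₂‖ ≤ Mg * ‖x₁ - x₂‖)
    (hGgbd : ∀ x ∈ X, ∀ μ : Euc m, ‖gradMul (Gg x) μ‖ ≤ Mg * ‖μ‖)
    (hgsmooth : ∀ x₁ ∈ X, ∀ x₂ ∈ X,
      ‖g x₁ - g x₂ - gradT (Gg x₂) (x₁ - x₂)‖ ≤ Lg / 2 * ‖x₁ - x₂‖ ^ 2 + Hg * ‖x₁ - x₂‖)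
    (hXtne : ∃ x ∈ X, ∀ j, g x j ≤ 0)
    (xstar : Euc n) (lamstar : Euc m) (hxstar : xstar ∈ X) (hlamstar : ∀ j, 0 ≤ lamstar j)
    (hsaddle₁ : ∀ x ∈ X,
      ⟪F xstar, xstar⟫_ℝ + ⟪lamstar, g xstar⟫_ℝ ≤ ⟪F xstar, x⟫_ℝ + ⟪lamstar, g x⟫_ℝ)
    (hsaddle₂ : ∀ lam' : Euc m, (∀ j, 0 ≤ lam' j) →
      ⟪lam', g xstar⟫_ℝ ≤ ⟪lamstar, g xstar⟫_ℝ)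
    (T : ℕ) (hT : 1 ≤ T)
    (γ η τ θ : ℕ → ℝ)
    (hγ : ∀ t, 0 < γ t) (hη : ∀ t, 0 < η t) (hτ : ∀ t, 0 < τ t) (hθ : ∀ t, 0 ≤ θ t)
    (hC₁ : ∀ t, γ (t + 1) * η (t + 1) ≤ γ t * η t)
    (hC₂ : ∀ t, γ (t + 1) * τ (t + 1) ≤ γ t * τ t)
    (hC₃ : ∀ t, γ (t + 1) * θ (t + 1) = γ t)
    (x xm : ℕ → Euc n) (lam : ℕ → Euc m) (ell ellm : ℕ → Euc m)
    (hx0 : x 0 ∈ X) (hxm0 : xm 0 = x 0) (hxm : ∀ t, xm (t + 1) = x t)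
    (hlam0 : lam 0 = 0)
    (hell0 : ell 0 = g (x 0))
    (hell : ∀ t, ell (t + 1) = g (x t) + gradT (Gg (x t)) (x (t + 1) - x t))
    (hellm0 : ellm 0 = g (x 0)) (hellm : ∀ t, ellm (t + 1) = ell t)
    (hlamPos : ∀ t, ∀ j, 0 ≤ lam (t + 1) j)
    (hlamMin : ∀ t, ∀ lam' : Euc m, (∀ j, 0 ≤ lam' j) →
      ⟪-((1 + θ t) • ell t - θ t • ellm t), lam (t + 1)⟫_ℝ
          + τ t / 2 * ‖lam (t + 1) - lam t‖ ^ 2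
        ≤ ⟪-((1 + θ t) • ell t - θ t • ellm t), lam'⟫_ℝ
          + τ t / 2 * ‖lam' - lam t‖ ^ 2)
    (hxS : ∀ t, x (t + 1) ∈ X)
    (hxMin : ∀ t, ∀ y ∈ X,
      ⟪(1 + θ t) • F (x t) - θ t • F (xm t) + gradMul (Gg (x t)) (lam (t + 1)),
          x (t + 1)⟫_ℝ + η t / 2 * ‖x (t + 1) - x t‖ ^ 2
        ≤ ⟪(1 + θ t) • F (x t) - θ t • F (xm t) + gradMul (Gg (x t)) (lam (t + 1)),
          y⟫_ℝ + η t / 2 * ‖y - x t‖ ^ 2)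
    (DX : ℝ) (hDX : IsGreatest {d | ∃ x₁ ∈ X, ∃ x₂ ∈ X, d = ‖x₁ - x₂‖} DX)
    (B : ℝ) (hB : 0 ≤ B) :
    (∀ z ∈ X, (∀ j, g z j ≤ 0) →
      (∑ t ∈ Finset.range T, γ t) *
          ⟪F z, (∑ t ∈ Finset.range T, γ t)⁻¹ • (∑ t ∈ Finset.range T, γ t • x (t + 1)) - z⟫_ℝ
        ≤ γ 0 * η 0 / 2 * ‖z - x 0‖ ^ 2
          + opconexNT γ η τ θ Lg Hg DX B F x xm lam ell ellm T 0)
    ∧ (∑ t ∈ Finset.range T, γ t) *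
          ‖posPart (g ((∑ t ∈ Finset.range T, γ t)⁻¹ • (∑ t ∈ Finset.range T, γ t • x (t + 1))))‖
        ≤ γ 0 * η 0 / 2 * ‖xstar - x 0‖ ^ 2 + γ 0 * τ 0 / 2 * (‖lamstar‖ + 1) ^ 2
          + opconexNT γ η τ θ Lg Hg DX B F x xm lam ell ellm T (‖lamstar‖ + 1) := by
  have hxmem : ∀ t, x t ∈ X := by
    intro t
    cases t with
    | zero => exact hx0
    | succ t => exact hxS t
  have hΓpos : 0 < ∑ t ∈ Finset.range T, γ t :=
    Finset.sum_pos (fun t _ => hγ t) (Finset.nonempty_range_iff.mpr (by omega))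
  have hDX0 : 0 ≤ DX := by
    obtain ⟨x₁, _, x₂, _, hd⟩ := hDX.1
    rw [hd]; positivity
  have hdle : ∀ t, ‖x (t + 1) - x t‖ ≤ DX := fun t =>
    hDX.2 ⟨x (t + 1), hxS t, x t, hxmem t, rfl⟩
  -- ==================== the master bound ====================
  have master : ∀ xx ∈ X, ∀ lamb : Euc m, (∀ j, 0 ≤ lamb j) → ∀ a : ℝ, ‖lamb‖ ≤ a →
      ∑ t ∈ Finset.range T,
          γ t * (⟪F (x (t + 1)), x (t + 1) - xx⟫_ℝ + ⟪g (x (t + 1)), lamb⟫_ℝ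
            - ⟪g xx, lam (t + 1)⟫_ℝ)
        ≤ γ 0 * η 0 / 2 * ‖xx - x 0‖ ^ 2 + γ 0 * τ 0 / 2 * ‖lamb‖ ^ 2
          + opconexNT γ η τ θ Lg Hg DX B F x xm lam ell ellm T a := by
    intro xx hxx lamb hlamb a ha
    have ha0 : 0 ≤ a := le_trans (norm_nonneg _) ha
    -- three-point inequalities
    have h3x : ∀ t, ⟪(1 + θ t) • F (x t) - θ t • F (xm t) + gradMul (Gg (x t)) (lam (t + 1)),
        x (t + 1) - xx⟫_ℝ
        ≤ η t / 2 * (‖xx - x t‖ ^ 2 - ‖x (t + 1) - x t‖ ^ 2 - ‖xx - x (t + 1)‖ ^ 2) := by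
      intro t
      exact three_point hXconv (hη t) (hxS t) (fun y hy => hxMin t y hy) hxx
    have h3l : ∀ t, ⟪-((1 + θ t) • ell t - θ t • ellm t), lam (t + 1) - lamb⟫_ℝ
        ≤ τ t / 2 * (‖lamb - lam t‖ ^ 2 - ‖lam (t + 1) - lam t‖ ^ 2
            - ‖lamb - lam (t + 1)‖ ^ 2) := by
      intro t
      exact three_point (orthant_convex m) (hτ t) (hlamPos t)
        (fun y hy => hlamMin t y hy) hlamb
    -- linearization error bounds
    have herr1 : ∀ t, ⟪g (x (t + 1)) - ell (t + 1), lamb⟫_ℝ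
        ≤ a * Hg * ‖x (t + 1) - x t‖ + B * Lg / 2 * ‖x (t + 1) - x t‖ ^ 2
          + Lg * DX / 2 * max (a - B) 0 * ‖x (t + 1) - x t‖ := by
      intro t
      have hd0 : (0:ℝ) ≤ ‖x (t + 1) - x t‖ := norm_nonneg _
      have hsm : ‖g (x (t + 1)) - ell (t + 1)‖
          ≤ Lg / 2 * ‖x (t + 1) - x t‖ ^ 2 + Hg * ‖x (t + 1) - x t‖ := by
        have h := hgsmooth (x (t + 1)) (hxS t) (x t) (hxmem t)
        have he : g (x (t + 1)) - ell (t + 1)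
            = g (x (t + 1)) - g (x t) - gradT (Gg (x t)) (x (t + 1) - x t) := by
          rw [hell t]; abel
        rw [he]; exact h
      have h1 : ⟪g (x (t + 1)) - ell (t + 1), lamb⟫_ℝ
          ≤ ‖g (x (t + 1)) - ell (t + 1)‖ * ‖lamb‖ := real_inner_le_norm _ _
      have h2 : ‖g (x (t + 1)) - ell (t + 1)‖ * ‖lamb‖
          ≤ (Lg / 2 * ‖x (t + 1) - x t‖ ^ 2 + Hg * ‖x (t + 1) - x t‖) * a :=
        mul_le_mul hsm ha (norm_nonneg _) (by positivity)
      have h3 : a * (Lg / 2) * ‖x (t + 1) - x t‖ ^ 2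
          ≤ B * Lg / 2 * ‖x (t + 1) - x t‖ ^ 2
            + Lg * DX / 2 * max (a - B) 0 * ‖x (t + 1) - x t‖ := by
        rcases le_total a B with hab | hab
        · rw [max_eq_right (by linarith : a - B ≤ 0)]
          have hmul : a * Lg * ‖x (t + 1) - x t‖ ^ 2 ≤ B * Lg * ‖x (t + 1) - x t‖ ^ 2 :=
            mul_le_mul_of_nonneg_right (mul_le_mul_of_nonneg_right hab hLg) (sq_nonneg _)
          linarith
        · rw [max_eq_left (by linarith : (0:ℝ) ≤ a - B)]
          have hc0 : (0:ℝ) ≤ (a - B) * Lg * ‖x (t + 1) - x t‖ :=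
            mul_nonneg (mul_nonneg (by linarith) hLg) hd0
          have hdD := mul_le_mul_of_nonneg_left (hdle t) hc0
          nlinarith [hdD]
      nlinarith [h1, h2, h3]
    have herr2 : ∀ t, ⟪(g (x t) + gradT (Gg (x t)) (xx - x t)) - g xx, lam (t + 1)⟫_ℝ ≤ 0 := by
      intro t
      apply euc_inner_nonpos _ _ _ (hlamPos t)
      intro j
      have hcv := hgconv (x t) (hxmem t) xx hxx j
      have hcomp : ((g (x t) + gradT (Gg (x t)) (xx - x t)) - g xx) j
          = g (x t) j + ⟪Gg (x t) j, xx - x t⟫_ℝ - g xx j := by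
        simp [gradT_apply]
      rw [hcomp]
      linarith
    -- the decomposition identity
    have ident : ∀ t, ⟪F (x (t + 1)), x (t + 1) - xx⟫_ℝ + ⟪g (x (t + 1)), lamb⟫_ℝ
          - ⟪g xx, lam (t + 1)⟫_ℝ
        = ⟪(1 + θ t) • F (x t) - θ t • F (xm t) + gradMul (Gg (x t)) (lam (t + 1)),
            x (t + 1) - xx⟫_ℝ
          + ⟪-((1 + θ t) • ell t - θ t • ellm t), lam (t + 1) - lamb⟫_ℝ
          + (⟪F (x (t + 1)) - F (x t), x (t + 1) - xx⟫_ℝ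
              + ⟪ell (t + 1) - ell t, lamb - lam (t + 1)⟫_ℝ)
          - θ t * (⟪F (x t) - F (xm t), x t - xx⟫_ℝ + ⟪ell t - ellm t, lamb - lam t⟫_ℝ)
          + θ t * (⟪F (x t) - F (xm t), x t - x (t + 1)⟫_ℝ
              + ⟪ell t - ellm t, lam (t + 1) - lam t⟫_ℝ)
          + ⟪g (x (t + 1)) - ell (t + 1), lamb⟫_ℝ
          + ⟪(g (x t) + gradT (Gg (x t)) (xx - x t)) - g xx, lam (t + 1)⟫_ℝ := by
      intro t
      have hsplit : gradT (Gg (x t)) (x (t + 1) - xx)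
          = (ell (t + 1) - g (x t)) - gradT (Gg (x t)) (xx - x t) := by
        have h1 : x (t + 1) - xx = (x (t + 1) - x t) - (xx - x t) := by abel
        rw [h1, gradT_sub, hell t]; abel
      have hc : ⟪(1 + θ t) • F (x t) - θ t • F (xm t) + gradMul (Gg (x t)) (lam (t + 1)),
          x (t + 1) - xx⟫_ℝ
          = (1 + θ t) * ⟪F (x t), x (t + 1) - xx⟫_ℝ - θ t * ⟪F (xm t), x (t + 1) - xx⟫_ℝ
            + ⟪(ell (t + 1) - g (x t)) - gradT (Gg (x t)) (xx - x t), lam (t + 1)⟫_ℝ := by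
        rw [inner_add_left, inner_sub_left, real_inner_smul_left, real_inner_smul_left,
          inner_gradMul', hsplit]
      rw [hc]
      simp only [inner_add_left, inner_sub_left, inner_neg_left, inner_add_right,
        inner_sub_right, real_inner_smul_left]
      ring
    -- local abbreviation for the telescoping quantity
    set Vv : ℕ → ℝ := fun s => γ s * θ s *
      (⟪F (x s) - F (xm s), x s - xx⟫_ℝ + ⟪ell s - ellm s, lamb - lam s⟫_ℝ) with hVvdef
    have hVup : ∀ t, Vv (t + 1)
        = γ t * (⟪F (x (t + 1)) - F (x t), x (t + 1) - xx⟫_ℝ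
            + ⟪ell (t + 1) - ell t, lamb - lam (t + 1)⟫_ℝ) := by
      intro t
      simp only [hVvdef]
      rw [hxm t, hellm t, hC₃ t]
    have hV0 : Vv 0 = 0 := by
      simp only [hVvdef]
      rw [hxm0, hell0, hellm0]
      simp
    -- the per-iteration inequality
    have key : ∀ t,
        γ t * (⟪F (x (t + 1)), x (t + 1) - xx⟫_ℝ + ⟪g (x (t + 1)), lamb⟫_ℝ
            - ⟪g xx, lam (t + 1)⟫_ℝ)
        ≤ γ t * η t / 2 * (‖xx - x t‖ ^ 2 - ‖xx - x (t + 1)‖ ^ 2)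
          + γ t * τ t / 2 * (‖lamb - lam t‖ ^ 2 - ‖lamb - lam (t + 1)‖ ^ 2)
          + (Vv (t + 1) - Vv t)
          + (γ t * θ t * ⟪F (x t) - F (xm t), x t - x (t + 1)⟫_ℝ
            + γ t * θ t * ⟪ell t - ellm t, lam (t + 1) - lam t⟫_ℝ
            - γ t * (η t - B * Lg) / 2 * ‖x (t + 1) - x t‖ ^ 2
            - γ t * τ t / 2 * ‖lam t - lam (t + 1)‖ ^ 2
            + (a * Hg + Lg * DX / 2 * max (a - B) 0) * γ t * ‖x (t + 1) - x t‖) := by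
      intro t
      rw [hVup t]
      simp only [hVvdef]
      rw [ident t]
      have hγt := (hγ t).le
      have H1 := mul_le_mul_of_nonneg_left (h3x t) hγt
      have H2 := mul_le_mul_of_nonneg_left (h3l t) hγt
      have HE1 := mul_le_mul_of_nonneg_left (herr1 t) hγt
      have HE2 : γ t * ⟪(g (x t) + gradT (Gg (x t)) (xx - x t)) - g xx, lam (t + 1)⟫_ℝ ≤ 0 :=
        mul_nonpos_of_nonneg_of_nonpos hγt (herr2 t)
      rw [norm_sub_rev (lam t) (lam (t + 1))]
      linarith [H1, H2, HE1, HE2]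
    -- sum it up
    have hsum := Finset.sum_le_sum (fun t (_ : t ∈ Finset.range T) => key t)
    simp only [Finset.sum_add_distrib] at hsum
    rw [Finset.sum_range_sub Vv] at hsum
    have htelx := telescope_dec (fun t => γ t * η t / 2) (fun t => ‖xx - x t‖ ^ 2)
      (fun t => by linarith [hC₁ t]) (fun t => sq_nonneg _) T hT
    have htelt := telescope_dec (fun t => γ t * τ t / 2) (fun t => ‖lamb - lam t‖ ^ 2)
      (fun t => by linarith [hC₂ t]) (fun t => sq_nonneg _) T hT
    have hVT : Vv T = γ (T - 1) * (⟪F (x T) - F (xm T), x T - xx⟫_ℝ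
        + ⟪ell T - ellm T, lamb - lam T⟫_ℝ) := by
      obtain ⟨T', rfl⟩ : ∃ T', T = T' + 1 := ⟨T - 1, (Nat.succ_pred_eq_of_pos hT).symm⟩
      simp only [hVvdef, Nat.add_sub_cancel]
      rw [hC₃ T']
    have hy1 := young_ip (F (x T) - F (xm T)) (x T - xx) (hγ (T - 1)) (hη (T - 1))
    rw [norm_sub_rev (x T) xx] at hy1
    have hy2 := young_ip (ell T - ellm T) (lamb - lam T) (hγ (T - 1)) (hτ (T - 1))
    rw [hlam0, sub_zero] at htelt
    rw [opconexNT]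
    simp only [Finset.sum_add_distrib]
    linarith [hsum, htelx, htelt, hy1, hy2, hVT, hV0]
  constructor
  · -- part (i)
    intro z hz hgz
    have hm := master z hz 0 (fun j => by simp) 0 (by simp)
    have hlow : ∀ t ∈ Finset.range T, γ t * ⟪F z, x (t + 1) - z⟫_ℝ
        ≤ γ t * (⟪F (x (t + 1)), x (t + 1) - z⟫_ℝ + ⟪g (x (t + 1)), (0 : Euc m)⟫_ℝ
            - ⟪g z, lam (t + 1)⟫_ℝ) := by
      intro t _
      apply mul_le_mul_of_nonneg_left _ (hγ t).le
      have hmono := hFmono (x (t + 1)) (hxS t) z hz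
      rw [inner_sub_left] at hmono
      have hz0 : ⟪g (x (t + 1)), (0 : Euc m)⟫_ℝ = 0 := inner_zero_right _
      have hsign : ⟪g z, lam (t + 1)⟫_ℝ ≤ 0 := euc_inner_nonpos _ _ hgz (hlamPos t)
      linarith
    have hchain := le_trans (Finset.sum_le_sum hlow) hm
    rw [weighted_avg_inner γ T hΓpos.ne' x (F z) z]
    rw [norm_zero] at hchain
    linarith [hchain]
  · -- part (ii)
    have hΓne : (∑ t ∈ Finset.range T, γ t) ≠ 0 := hΓpos.ne'
    set xbar : Euc n :=
      (∑ t ∈ Finset.range T, γ t)⁻¹ • (∑ t ∈ Finset.range T, γ t • x (t + 1)) with hxbar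
    have hxbarX : xbar ∈ X := by
      rw [hxbar, Finset.smul_sum]
      simp only [smul_smul]
      refine hXconv.sum_mem
        (fun t _ => mul_nonneg (inv_nonneg.mpr hΓpos.le) (hγ t).le) ?_ (fun t _ => hxS t)
      rw [← Finset.mul_sum, inv_mul_cancel₀ hΓne]
    obtain ⟨lamhat, hlhpos, hlhnorm, hlhval⟩ : ∃ lh : Euc m, (∀ j, 0 ≤ lh j)
        ∧ ‖lh‖ ≤ ‖lamstar‖ + 1
        ∧ ⟪g xbar, lh⟫_ℝ = (‖lamstar‖ + 1) * ‖posPart (g xbar)‖ := by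
      by_cases hp0 : posPart (g xbar) = 0
      · exact ⟨0, fun j => by simp, by simp; positivity, by simp [hp0]⟩
      · have hpn : 0 < ‖posPart (g xbar)‖ := norm_pos_iff.mpr hp0
        refine ⟨((‖lamstar‖ + 1) * ‖posPart (g xbar)‖⁻¹) • posPart (g xbar), ?_, ?_, ?_⟩
        · intro j
          have hj : (((‖lamstar‖ + 1) * ‖posPart (g xbar)‖⁻¹) • posPart (g xbar)) j
              = ((‖lamstar‖ + 1) * ‖posPart (g xbar)‖⁻¹) * posPart (g xbar) j := rfl
          rw [hj, posPart_apply]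
          positivity
        · rw [norm_smul, Real.norm_eq_abs, abs_of_nonneg (by positivity)]
          rw [mul_assoc, inv_mul_cancel₀ hpn.ne', mul_one]
        · rw [real_inner_smul_right, inner_posPart_self]
          field_simp
    have hm := master xstar hxstar lamhat hlhpos (‖lamstar‖ + 1) hlhnorm
    have hcs0 : 0 ≤ ⟪lamstar, g xstar⟫_ℝ := by
      have h := hsaddle₂ 0 (fun j => by simp)
      simpa using h
    have hcs1 : ⟪lamstar, g xstar⟫_ℝ ≤ 0 := by
      have h := hsaddle₂ ((2:ℝ) • lamstar) (fun j => by
        have hj : ((2:ℝ) • lamstar) j = 2 * lamstar j := rfl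
        rw [hj]; linarith [hlamstar j])
      rw [real_inner_smul_left] at h
      linarith
    have hcs : ⟪lamstar, g xstar⟫_ℝ = 0 := le_antisymm hcs1 hcs0
    have hgxs : ∀ j, g xstar j ≤ 0 := by
      intro j
      have h := hsaddle₂ (EuclideanSpace.single j (1:ℝ)) (fun k => by
        rw [EuclideanSpace.single_apply]
        split_ifs <;> norm_num)
      rw [hcs] at h
      have hsing : ⟪EuclideanSpace.single j (1:ℝ), g xstar⟫_ℝ = g xstar j := by
        rw [euc_inner_eq]
        simp [EuclideanSpace.single_apply]
      rwa [hsing] at h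
    have hlow : ∀ t ∈ Finset.range T,
        γ t * (⟪F xstar, x (t + 1) - xstar⟫_ℝ
          + (⟪g xbar, lamhat⟫_ℝ + ⟪gradMul (Gg xbar) lamhat, x (t + 1) - xbar⟫_ℝ))
        ≤ γ t * (⟪F (x (t + 1)), x (t + 1) - xstar⟫_ℝ + ⟪g (x (t + 1)), lamhat⟫_ℝ
            - ⟪g xstar, lam (t + 1)⟫_ℝ) := by
      intro t _
      apply mul_le_mul_of_nonneg_left _ (hγ t).le
      have hmono := hFmono (x (t + 1)) (hxS t) xstar hxstar
      rw [inner_sub_left] at hmono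
      have hjensen : ⟪g xbar, lamhat⟫_ℝ + ⟪gradMul (Gg xbar) lamhat, x (t + 1) - xbar⟫_ℝ
          ≤ ⟪g (x (t + 1)), lamhat⟫_ℝ := by
        rw [inner_gradMul, euc_inner_eq, euc_inner_eq, euc_inner_eq,
          ← Finset.sum_add_distrib]
        apply Finset.sum_le_sum
        intro j _
        have hcv := hgconv xbar hxbarX (x (t + 1)) (hxS t) j
        have hlj := hlhpos j
        have hgt : gradT (Gg xbar) (x (t + 1) - xbar) j
            = ⟪Gg xbar j, x (t + 1) - xbar⟫_ℝ := gradT_apply _ _ _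
        rw [hgt]
        nlinarith [hcv, hlj]
      have hsign : ⟪g xstar, lam (t + 1)⟫_ℝ ≤ 0 := euc_inner_nonpos _ _ hgxs (hlamPos t)
      linarith
    have hchain := le_trans (Finset.sum_le_sum hlow) hm
    have hA := weighted_avg_inner γ T hΓne x (F xstar) xstar
    rw [← hxbar] at hA
    have hB := weighted_avg_inner γ T hΓne x (gradMul (Gg xbar) lamhat) xbar
    rw [← hxbar, sub_self, inner_zero_right, mul_zero] at hB
    have hsplit : ∑ t ∈ Finset.range T, γ t * (⟪F xstar, x (t + 1) - xstar⟫_ℝ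
          + (⟪g xbar, lamhat⟫_ℝ + ⟪gradMul (Gg xbar) lamhat, x (t + 1) - xbar⟫_ℝ))
        = (∑ t ∈ Finset.range T, γ t) * ⟪F xstar, xbar - xstar⟫_ℝ
          + (∑ t ∈ Finset.range T, γ t) * ⟪g xbar, lamhat⟫_ℝ := by
      simp only [mul_add]
      rw [Finset.sum_add_distrib, Finset.sum_add_distrib, ← Finset.sum_mul, ← hA, ← hB]
      ring
    rw [hsplit] at hchain
    have hgeo : ‖posPart (g xbar)‖
        ≤ ⟪F xstar, xbar - xstar⟫_ℝ + ⟪g xbar, lamhat⟫_ℝ := by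
      have hsad := hsaddle₁ xbar hxbarX
      have hilp := inner_le_posPart lamstar (g xbar) hlamstar
      have he : ⟪F xstar, xbar - xstar⟫_ℝ = ⟪F xstar, xbar⟫_ℝ - ⟪F xstar, xstar⟫_ℝ :=
        inner_sub_right _ _ _
      nlinarith [hsad, hilp, hcs, hlhval, he, norm_nonneg (posPart (g xbar))]
    have hgeo2 := mul_le_mul_of_nonneg_left hgeo hΓpos.le
    rw [mul_add] at hgeo2
    have hnorm2 : γ 0 * τ 0 / 2 * ‖lamhat‖ ^ 2 ≤ γ 0 * τ 0 / 2 * (‖lamstar‖ + 1) ^ 2 :=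
      mul_le_mul_of_nonneg_left (pow_le_pow_left₀ (norm_nonneg _) hlhnorm 2)
        (div_nonneg (mul_nonneg (hγ 0).le (hτ 0).le) (by norm_num))
    linarith [hgeo2, hchain, hnorm2]
end
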